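/- Let Z be a {0,1}-valued random variable and suppose the family consisting of the {0,1}-valued potential mediators (M_{d,z})_{d,z∈{0,1}} and the integrable potential outcomes Y_{0,0}, Y_{0,1} is independent of Z. Then the natural indirect effect satisfies E[Y_{0,M_{1,Z}} − Y_{0,M_{0,Z}}] = Σ_{z∈{0,1}} ( E[(Y_{0,1} − Y_{0,0})·1{M_{1,z} > M_{0,z}}] − E[(Y_{0,1} − Y_{0,0})·1{M_{1,z} < M_{0,z}}] )·P(Z=z). -/

import Mathlib

open MeasureTheory ProbabilityTheory

/-- Conditional mean `E[W | A] = E[W·1_A] / P(A)` (set integral divided by probability). -/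
noncomputable def condMean {Ω : Type*} [MeasurableSpace Ω] (P : Measure Ω)
    (W : Ω → ℝ) (A : Set Ω) : ℝ :=
  (∫ ω in A, W ω ∂P) / (P A).toReal

/-- A `{0,1}`-valued (Bool-coded) random variable, viewed as a real number. -/
noncomputable def bR (b : Bool) : ℝ := if b then 1 else 0

/-- Auxiliary: the σ-algebra generated by the potential mediators and potential outcomes. -/
def sigMY {Ω : Type*} (M : Bool → Bool → Ω → Bool) (Y0 : Bool → Ω → ℝ) :
    MeasurableSpace Ω :=
  (⨆ (d : Bool) (z : Bool), MeasurableSpace.comap (M d z) inferInstance)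
    ⊔ (⨆ (m : Bool), MeasurableSpace.comap (Y0 m) inferInstance)

/-- if the potential mediators and the potential outcomes `Y_{0,0}, Y_{0,1}`
are jointly independent of `Z`, the natural indirect effect `E[Y_{0,M_{1,Z}} - Y_{0,M_{0,Z}}]`
decomposes over instrument values as a `P(Z=z)`-weighted sum of weighted differences of
subgroup average mediator effects. -/
theorem stmt_10 {Ω : Type*} [MeasurableSpace Ω] (P : Measure Ω) [IsProbabilityMeasure P]
    (Z : Ω → Bool) (M : Bool → Bool → Ω → Bool) (Y0 : Bool → Ω → ℝ)
    (hZ : Measurable Z) (hM : ∀ d z, Measurable (M d z))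
    (hY : ∀ m, Integrable (Y0 m) P)
    (hIndep : Indep
      ((⨆ (d : Bool) (z : Bool), MeasurableSpace.comap (M d z) inferInstance)
        ⊔ (⨆ (m : Bool), MeasurableSpace.comap (Y0 m) inferInstance))
      (MeasurableSpace.comap Z inferInstance) P) :
    ∫ ω, (Y0 (M true (Z ω) ω) ω - Y0 (M false (Z ω) ω) ω) ∂P
      = ∑ z : Bool,
          ((∫ ω in {ω | M false z ω < M true z ω}, (Y0 true ω - Y0 false ω) ∂P)
            - ∫ ω in {ω | M true z ω < M false z ω}, (Y0 true ω - Y0 false ω) ∂P)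
          * (P {ω | Z ω = z}).toReal := by
  classical
  have hIndep' : Indep (sigMY M Y0) (MeasurableSpace.comap Z inferInstance) P := hIndep
  set D : Ω → ℝ := fun ω => Y0 true ω - Y0 false ω with hDdef
  have hD : Integrable D P := (hY true).sub (hY false)
  set g : Bool → Ω → ℝ := fun z ω => D ω * (bR (M true z ω) - bR (M false z ω)) with hgdef
  -- pointwise identity on Bool
  have key : ∀ (Yv : Bool → ℝ) (a b : Bool),
      Yv a - Yv b = (Yv true - Yv false) * (bR a - bR b) := by
    intro Yv a b; cases a <;> cases b <;> simp [bR]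
  -- measurability facts
  have hAmeas : ∀ z, MeasurableSet {ω | M false z ω < M true z ω} := by
    intro z
    have h : {ω | M false z ω < M true z ω}
        = (M false z) ⁻¹' {false} ∩ (M true z) ⁻¹' {true} := by
      ext ω
      cases hf : M false z ω <;> cases ht : M true z ω <;>
        simp [hf, ht, Set.mem_setOf_eq]
    rw [h]
    exact ((hM false z) (measurableSet_singleton _)).inter
      ((hM true z) (measurableSet_singleton _))
  have hBmeas : ∀ z, MeasurableSet {ω | M true z ω < M false z ω} := by
    intro z
    have h : {ω | M true z ω < M false z ω}
        = (M true z) ⁻¹' {false} ∩ (M false z) ⁻¹' {true} := by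
      ext ω
      cases hf : M false z ω <;> cases ht : M true z ω <;>
        simp [hf, ht, Set.mem_setOf_eq]
    rw [h]
    exact ((hM true z) (measurableSet_singleton _)).inter
      ((hM false z) (measurableSet_singleton _))
  have hsmeas : ∀ z : Bool, MeasurableSet {ω | Z ω = z} := fun z =>
    hZ (measurableSet_singleton z)
  -- g z is ambient-measurable-ish and integrable
  have hcmeas : ∀ z, Measurable (fun ω => bR (M true z ω) - bR (M false z ω)) := by
    intro z
    exact ((Measurable.of_discrete (f := bR)).comp (hM true z)).sub
      ((Measurable.of_discrete (f := bR)).comp (hM false z))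
  have hgint : ∀ z, Integrable (g z) P := by
    intro z
    refine hD.abs.mono' (hD.1.mul (hcmeas z).aestronglyMeasurable) ?_
    refine Filter.Eventually.of_forall (fun ω => ?_)
    have h1 : |bR (M true z ω) - bR (M false z ω)| ≤ 1 := by
      cases ht : M true z ω <;> cases hf : M false z ω <;> norm_num [bR]
    calc ‖D ω * (bR (M true z ω) - bR (M false z ω))‖
        = |D ω| * |bR (M true z ω) - bR (M false z ω)| := abs_mul _ _
      _ ≤ |D ω| * 1 := mul_le_mul_of_nonneg_left h1 (abs_nonneg _)
      _ = |D ω| := mul_one _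
  -- g z is measurable w.r.t. sigMY
  have hgm1 : ∀ z, Measurable[sigMY M Y0] (g z) := by
    intro z
    have hY' : ∀ m, Measurable[sigMY M Y0] (Y0 m) := by
      intro m
      refine Measurable.of_comap_le ?_
      exact le_trans (le_iSup (fun m => MeasurableSpace.comap (Y0 m) inferInstance) m)
        le_sup_right
    have hM' : ∀ d z, Measurable[sigMY M Y0] (M d z) := by
      intro d z
      refine Measurable.of_comap_le ?_
      refine le_trans ?_ le_sup_left
      exact le_trans (le_iSup (fun z => MeasurableSpace.comap (M d z) inferInstance) z)
        (le_iSup (fun d => ⨆ z, MeasurableSpace.comap (M d z) inferInstance) d)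
    exact ((hY' true).sub (hY' false)).mul
      (((Measurable.of_discrete (f := bR)).comp (hM' true z)).sub
        ((Measurable.of_discrete (f := bR)).comp (hM' false z)))
  -- χ z : real indicator of {Z = z}
  set χ : Bool → Ω → ℝ := fun z ω => if Z ω = z then (1:ℝ) else 0 with hχdef
  have hχm2 : ∀ z, Measurable[MeasurableSpace.comap Z inferInstance] (χ z) := by
    intro z
    have hZm : Measurable[MeasurableSpace.comap Z inferInstance] Z :=
      Measurable.of_comap_le le_rfl
    exact (Measurable.of_discrete (f := fun b : Bool => if b = z then (1:ℝ) else 0)).comp hZm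
  -- independence step
  have hind : ∀ z, ∫ ω in {ω | Z ω = z}, g z ω ∂P
      = (∫ ω, g z ω ∂P) * (P {ω | Z ω = z}).toReal := by
    intro z
    have hIF : IndepFun (g z) (χ z) P := by
      have h1 : Indep (MeasurableSpace.comap (g z) inferInstance)
          (MeasurableSpace.comap Z inferInstance) P :=
        indep_of_indep_of_le_left hIndep' (hgm1 z).comap_le
      exact indep_of_indep_of_le_right h1 (hχm2 z).comap_le
    have hmul : ∫ ω, (g z * χ z) ω ∂P = (∫ ω, g z ω ∂P) * ∫ ω, χ z ω ∂P :=
      hIF.integral_mul_eq_mul_integral (hgint z).1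
        ((hχm2 z).mono hZ.comap_le le_rfl).aestronglyMeasurable
    have h2 : ∫ ω in {ω | Z ω = z}, g z ω ∂P = ∫ ω, (g z * χ z) ω ∂P := by
      rw [← integral_indicator (hsmeas z)]
      congr 1
      ext ω
      by_cases h : Z ω = z <;>
        simp [Set.indicator_apply, Set.mem_setOf_eq, h, χ]
    have h3 : ∫ ω, χ z ω ∂P = (P {ω | Z ω = z}).toReal := by
      have h : χ z = Set.indicator {ω | Z ω = z} (fun _ => (1:ℝ)) := by
        ext ω
        by_cases h : Z ω = z <;> simp [Set.indicator_apply, Set.mem_setOf_eq, h, χ]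
      rw [h, integral_indicator_const _ (hsmeas z), smul_eq_mul, mul_one, measureReal_def]
    rw [h2, hmul, h3]
  -- ∫ g z as difference of set integrals
  have hGsplit : ∀ z, ∫ ω, g z ω ∂P
      = (∫ ω in {ω | M false z ω < M true z ω}, D ω ∂P)
        - ∫ ω in {ω | M true z ω < M false z ω}, D ω ∂P := by
    intro z
    rw [← integral_indicator (hAmeas z), ← integral_indicator (hBmeas z),
      ← integral_sub (hD.indicator (hAmeas z)) (hD.indicator (hBmeas z))]
    congr 1
    ext ω
    cases ht : M true z ω <;> cases hf : M false z ω <;>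
      simp [Set.indicator_apply, Set.mem_setOf_eq, ht, hf, bR, g]
  -- integrability of the full integrand
  have hfeq : ∀ ω, Y0 (M true (Z ω) ω) ω - Y0 (M false (Z ω) ω) ω = g (Z ω) ω := by
    intro ω
    exact key (fun b => Y0 b ω) (M true (Z ω) ω) (M false (Z ω) ω)
  have hfeq2 : (fun ω => Y0 (M true (Z ω) ω) ω - Y0 (M false (Z ω) ω) ω)
      = fun ω => Set.indicator {ω | Z ω = true} (g true) ω
          + Set.indicator {ω | Z ω = false} (g false) ω := by
    ext ω
    rw [hfeq ω]
    cases h : Z ω <;> simp [Set.indicator_apply, Set.mem_setOf_eq, h]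
  have hfint : Integrable (fun ω => Y0 (M true (Z ω) ω) ω - Y0 (M false (Z ω) ω) ω) P := by
    rw [hfeq2]
    exact ((hgint true).indicator (hsmeas true)).add ((hgint false).indicator (hsmeas false))
  -- split the integral over {Z = true} and its complement {Z = false}
  have hcompl : {ω | Z ω = true}ᶜ = {ω | Z ω = false} := by
    ext ω; cases h : Z ω <;> simp [h]
  have hsplit : ∫ ω, (Y0 (M true (Z ω) ω) ω - Y0 (M false (Z ω) ω) ω) ∂P
      = (∫ ω in {ω | Z ω = true}, (Y0 (M true (Z ω) ω) ω - Y0 (M false (Z ω) ω) ω) ∂P)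
        + ∫ ω in {ω | Z ω = false}, (Y0 (M true (Z ω) ω) ω - Y0 (M false (Z ω) ω) ω) ∂P := by
    rw [← hcompl]
    exact (integral_add_compl (hsmeas true) hfint).symm
  have hon : ∀ z : Bool, ∫ ω in {ω | Z ω = z}, (Y0 (M true (Z ω) ω) ω - Y0 (M false (Z ω) ω) ω) ∂P
      = ∫ ω in {ω | Z ω = z}, g z ω ∂P := by
    intro z
    refine setIntegral_congr_fun (hsmeas z) (fun ω hω => ?_)
    have hzω : Z ω = z := hω
    rw [hfeq ω, hzω]
  rw [hsplit, hon true, hon false, hind true, hind false, hGsplit true, hGsplit false,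
    Fintype.sum_bool]
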